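/- Fix an integer r ≥ 1. There is a constant C > 0 such that for all sufficiently large N the following holds: set y = 1/(4√N); then for every real x with y ≤ |x| ≤ 1/2, writing τ = x + iy and q = e^{2πiτ}, one has |S̃_r(q)| ≤ C·N^{r/2 + 1/4}. -/

import Mathlib

open scoped BigOperators
open Filter MeasureTheory

/-- An overpartition of `n`: a partition of `n` in which the first occurrence of
each part size may be overlined.  We encode it as a finite set of (distinct)
overlined parts together with a multiset of non-overlined parts, all positive,
with total sum `n`. -/
structure Overpartition (n : ℕ) where
  overlined : Finset ℕ
  nonoverlined : Multiset ℕ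
  overlined_pos : ∀ i ∈ overlined, 0 < i
  nonoverlined_pos : ∀ i ∈ nonoverlined, 0 < i
  total : (overlined.sum id) + nonoverlined.sum = n

namespace Overpartition

/-- The multiset of all parts of an overpartition. -/
def parts {n : ℕ} (p : Overpartition n) : Multiset ℕ := p.overlined.val + p.nonoverlined

/-- Dyson's rank of an overpartition: largest part minus number of parts. -/
def rank {n : ℕ} (p : Overpartition n) : ℤ :=
  (p.parts.sup : ℤ) - (Multiset.card p.parts : ℤ)

end Overpartition

/-- The crank of a partition (given as a multiset of positive parts):
the largest part if there are no 1's, and otherwise `μ(λ) - o(λ)` where `o(λ)`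
is the number of 1's and `μ(λ)` is the number of parts larger than `o(λ)`. -/
def multisetCrank (s : Multiset ℕ) : ℤ :=
  if s.count 1 = 0 then (s.sup : ℤ)
  else ((s.filter (fun part => s.count 1 < part)).card : ℤ) - (s.count 1 : ℤ)

/-- The first residual crank of an overpartition: the crank of the subpartition
consisting of the non-overlined parts. -/
def Overpartition.crank {n : ℕ} (p : Overpartition n) : ℤ := multisetCrank p.nonoverlined

/-- `Mbar m n` is the number of overpartitions of `n` with first residual crank `m`. -/
noncomputable def Mbar (m : ℤ) (n : ℕ) : ℕ :=
  Nat.card {p : Overpartition n // p.crank = m}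

/-- `Nbar m n` is the number of overpartitions of `n` with Dyson rank `m`. -/
noncomputable def Nbar (m : ℤ) (n : ℕ) : ℕ :=
  Nat.card {p : Overpartition n // p.rank = m}

/-- The `r`-th positive crank moment `M̄_r^+(N) = Σ_{m ≥ 1} m^r M̄(m,N)`. -/
noncomputable def Mplus (r N : ℕ) : ℝ :=
  ∑' m : ℕ, ((m : ℝ) + 1) ^ r * (Mbar ((m : ℤ) + 1) N : ℝ)

/-- The `r`-th positive rank moment `N̄_r^+(N) = Σ_{m ≥ 1} m^r N̄(m,N)`. -/
noncomputable def Nplus (r N : ℕ) : ℝ :=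
  ∑' m : ℕ, ((m : ℝ) + 1) ^ r * (Nbar ((m : ℤ) + 1) N : ℝ)

/-- Positive symmetrized crank moment `μ̄_r^+(n) = Σ_{m ≥ 1} C(m + ⌊(r-1)/2⌋, r) M̄(m,n)`. -/
noncomputable def mubar (r n : ℕ) : ℝ :=
  ∑' m : ℕ, (Nat.choose (m + 1 + (r - 1) / 2) r : ℝ) * (Mbar ((m : ℤ) + 1) n : ℝ)

/-- Positive symmetrized rank moment `η̄_r^+(n) = Σ_{m ≥ 1} C(m + ⌊(r-1)/2⌋, r) N̄(m,n)`. -/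
noncomputable def etabar (r n : ℕ) : ℝ :=
  ∑' m : ℕ, (Nat.choose (m + 1 + (r - 1) / 2) r : ℝ) * (Nbar ((m : ℤ) + 1) n : ℝ)

/-- The Dirichlet eta function at positive integers:
`η(1) = log 2` and `η(r) = (1 - 2^{1-r}) ζ(r)` for `r ≥ 2`. -/
noncomputable def dirichletEtaNat (r : ℕ) : ℝ :=
  if r = 1 then Real.log 2 else (1 - 2 ^ (1 - (r : ℝ))) * (riemannZeta r).re

/-- The infinite Pochhammer symbol `(a; q)_∞ = Π_{j ≥ 0} (1 - a q^j)`. -/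
noncomputable def poch (a q : ℂ) : ℂ := ∏' j : ℕ, (1 - a * q ^ j)

/-- The (integral) exponent `n²/2 + (r/2 + ρ_C(r)) n`, where `ρ_C(r) = 0` for odd `r`
and `1/2` for even `r`. -/
def eC (r n : ℕ) : ℕ := (n * n + r * n + (if r % 2 = 0 then n else 0)) / 2

/-- The (integral) exponent `n² + (r/2 + ρ_R(r)) n`, where `ρ_R(r) = 1/2` for odd `r`
and `1` for even `r`. -/
def eR (r n : ℕ) : ℕ := (2 * n * n + r * n + (if r % 2 = 1 then n else 2 * n)) / 2

/-- `S_r(q) = Σ_{n ≥ 1} (-1)^{n+1} q^{n²/2 + (r/2 + ρ_C(r)) n} / (1 - q^n)^r`. -/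
noncomputable def Sr (r : ℕ) (q : ℂ) : ℂ :=
  ∑' n : ℕ, (-1 : ℂ) ^ n * q ^ eC r (n + 1) / (1 - q ^ (n + 1)) ^ r

/-- `S̃_r(q) = Σ_{n ≥ 1} (-1)^{n+1} q^{n² + (r/2 + ρ_R(r)) n} / ((1 - q^n)^r (1 + q^n))`. -/
noncomputable def Str (r : ℕ) (q : ℂ) : ℂ :=
  ∑' n : ℕ, (-1 : ℂ) ^ n * q ^ eR r (n + 1) / ((1 - q ^ (n + 1)) ^ r * (1 + q ^ (n + 1)))

/-- `SC_r(q) = ((-q;q)_∞/(q;q)_∞) S_r(q)`, the generating function of the positive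
symmetrized crank moments. -/
noncomputable def SCr (r : ℕ) (q : ℂ) : ℂ := (poch (-q) q / poch q q) * Sr r q

/-- `SR_r(q) = 2 ((-q;q)_∞/(q;q)_∞) S̃_r(q)`, the generating function of the positive
symmetrized rank moments. -/
noncomputable def SRr (r : ℕ) (q : ℂ) : ℂ := 2 * (poch (-q) q / poch q q) * Str r q

/-- `c_r = ζ(r) (1 - 2^{1-r})`. -/
noncomputable def cconst (r : ℕ) : ℂ := riemannZeta r * (1 - 2 ^ (1 - (r : ℂ)))

/-- `d_r = -(ζ(r-2)(1-2^{3-r})/2 + ρ_C(r) ζ(r-1)(1-2^{1-r}))`. -/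
noncomputable def dconst (r : ℕ) : ℂ :=
  -(riemannZeta ((r : ℂ) - 2) * (1 - 2 ^ (3 - (r : ℂ))) / 2 +
    (if r % 2 = 0 then (1 : ℂ) / 2 else 0) * riemannZeta ((r : ℂ) - 1) * (1 - 2 ^ (1 - (r : ℂ))))

/-- `d'_r = -(ζ(r-2)(1-2^{3-r}) + (ρ_R(r)/2) ζ(r-1)(1-2^{1-r}))`. -/
noncomputable def dconst' (r : ℕ) : ℂ :=
  -(riemannZeta ((r : ℂ) - 2) * (1 - 2 ^ (3 - (r : ℂ))) +
    (if r % 2 = 1 then (1 : ℂ) / 4 else (1 : ℂ) / 2) * riemannZeta ((r : ℂ) - 1) *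
      (1 - 2 ^ (1 - (r : ℂ))))

/-- The modified Bessel function of the first kind,
`I_s(x) = Σ_{k ≥ 0} (x/2)^{2k+s} / (k! Γ(k+s+1))`. -/
noncomputable def besselI (s x : ℝ) : ℝ :=
  ∑' k : ℕ, (x / 2) ^ (2 * (k : ℝ) + s) / ((k.factorial : ℝ) * Real.Gamma ((k : ℝ) + s + 1))

/-- The point `τ = x + i y` in the upper half plane. -/
noncomputable def mkTau (x y : ℝ) : ℂ := (x : ℂ) + (y : ℂ) * Complex.I

lemma aux1 (t : ℝ) (ht : 0 ≤ t) : t ^ ((1:ℝ)/4) ≤ Real.exp t := by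
  rcases le_total t 1 with h | h
  · calc t ^ ((1:ℝ)/4) ≤ 1 := Real.rpow_le_one ht h (by norm_num)
    _ ≤ Real.exp t := Real.one_le_exp ht
  · calc t ^ ((1:ℝ)/4) ≤ t ^ (1:ℝ) := Real.rpow_le_rpow_of_exponent_le h (by norm_num)
    _ = t := Real.rpow_one t
    _ ≤ Real.exp t := by linarith [Real.add_one_le_exp t]

lemma aux1' (T : ℝ) (hT : 0 < T) : Real.exp (-T) ≤ T ^ (-((1:ℝ)/4)) := by
  rw [Real.exp_neg, Real.rpow_neg hT.le]
  exact inv_anti₀ (Real.rpow_pos_of_pos hT _) (aux1 T hT.le)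

lemma aux2 (t : ℝ) (ht : 0 < t) : 1/(1 - Real.exp (-t)) ≤ 1 + 1/t := by
  have h1 : (1:ℝ) + t ≤ Real.exp t := by linarith [Real.add_one_le_exp t]
  have h0 : Real.exp (-t) ≤ 1/(1+t) := by
    rw [Real.exp_neg, one_div]
    exact inv_anti₀ (by linarith) h1
  have h2 : t/(1+t) ≤ 1 - Real.exp (-t) := by
    have : 1 - 1/(1+t) = t/(1+t) := by field_simp; ring
    linarith [this]
  have h3 : (0:ℝ) < t/(1+t) := by positivity
  calc 1/(1 - Real.exp (-t)) ≤ 1/(t/(1+t)) := one_div_le_one_div_of_le h3 h2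
    _ = (1+t)/t := by rw [one_div_div]
    _ = 1 + 1/t := by field_simp; ring

lemma aux3 (u : ℝ) (hu : 0 ≤ u) (r : ℕ) : (1+u)^r ≤ 2^r * (1 + u^r) := by
  rcases le_total u 1 with h | h
  · calc (1+u)^r ≤ 2^r := pow_le_pow_left₀ (by linarith) (by linarith) r
    _ ≤ 2^r * (1 + u^r) := by nlinarith [pow_nonneg hu r, pow_pos (by norm_num : (0:ℝ)<2) r]
  · calc (1+u)^r ≤ (2*u)^r := pow_le_pow_left₀ (by linarith) (by linarith) r
    _ = 2^r * u^r := mul_pow 2 u r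
    _ ≤ 2^r * (1 + u^r) := by nlinarith [pow_pos (by norm_num : (0:ℝ)<2) r, pow_nonneg hu r]

lemma aux4 (r n : ℕ) : n * n ≤ eR r n := by
  unfold eR
  have : n * n * 2 ≤ 2 * n * n + r * n + (if r % 2 = 1 then n else 2 * n) := by
    split <;> nlinarith
  omega

lemma Zsummable : Summable (fun m : ℕ => ((m:ℝ)+1) ^ (-(3/2 : ℝ))) := by
  have h := (Real.summable_nat_rpow (p := -(3/2:ℝ))).mpr (by norm_num)
  have h2 := (summable_nat_add_iff 1).mpr h
  refine h2.congr fun n => ?_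
  push_cast
  ring_nf

set_option maxHeartbeats 2000000 in
lemma StrKeyBound (r : ℕ) (hr : 1 ≤ r) (x y : ℝ) (hy0 : 0 < y) (hy1 : y ≤ 1) :
    ‖Str r (Complex.exp (2 * Real.pi * Complex.I * mkTau x y))‖ ≤
      (2^(r+1) + 2^r * (∑' m : ℕ, ((m:ℝ)+1) ^ (-(3/2 : ℝ)))) * (1/y) ^ ((r:ℝ) + 1/2) := by
  obtain ⟨s, rfl⟩ : ∃ s, r = s + 1 := ⟨r - 1, (Nat.succ_pred_eq_of_pos hr).symm⟩
  set r := s + 1 with hrdef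
  set q : ℂ := Complex.exp (2 * Real.pi * Complex.I * mkTau x y) with hqdef
  set v : ℝ := Real.exp (-(2*Real.pi*y)) with hvdef
  have hpi : (1:ℝ) ≤ 2 * Real.pi := by nlinarith [Real.pi_gt_three]
  have hq : ‖q‖ = v := by
    have h : (2 * (Real.pi:ℂ) * Complex.I * mkTau x y).re = -(2*Real.pi*y) := by
      simp [mkTau, Complex.mul_re, Complex.mul_im]
    rw [hqdef, Complex.norm_exp, h]
  have hv0 : 0 < v := Real.exp_pos _
  have hv1 : v < 1 := by
    rw [hvdef, ← Real.exp_zero]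
    apply Real.exp_lt_exp.mpr
    nlinarith [Real.pi_gt_three]
  -- the majorants
  set g1 : ℕ → ℝ := fun m => 2^r * v^((m+1)*(m+1)) with hg1def
  set g2 : ℕ → ℝ := fun m => 2^r * v^((m+1)*(m+1)) * (1/(((m:ℝ)+1)*y))^r with hg2def
  set Z : ℝ := ∑' m : ℕ, ((m:ℝ)+1) ^ (-(3/2 : ℝ)) with hZdef
  set K : ℝ := 2^r * (1/y)^((1/4):ℝ) * (1/y)^r with hKdef
  have hA : (1:ℝ) ≤ 1/y := by
    simpa using one_div_le_one_div_of_le hy0 hy1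
  have hA0 : (0:ℝ) < 1/y := by positivity
  -- powers of v as exponentials
  have hvpow : ∀ k : ℕ, v ^ k = Real.exp (-(2*Real.pi*y*k)) := by
    intro k
    rw [hvdef, ← Real.exp_nat_mul]
    congr 1
    ring
  -- bounds on the reciprocals
  have hrecip : ∀ n : ℕ, 1 ≤ n → 1/(1 - v^n) ≤ 1 + 1/((n:ℝ)*y) := by
    intro n hn
    have hn0 : (0:ℝ) < n := by exact_mod_cast hn
    have ht : (0:ℝ) < 2*Real.pi*y*n := by positivity
    rw [hvpow n]
    refine (aux2 _ ht).trans ?_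
    have : 1/(2*Real.pi*y*(n:ℝ)) ≤ 1/((n:ℝ)*y) := by
      apply one_div_le_one_div_of_le (by positivity)
      nlinarith
    linarith
  have hrecip2 : ∀ n : ℕ, 1 ≤ n → 1/(1 - (v^n)^2) ≤ 1 + 1/((n:ℝ)*y) := by
    intro n hn
    have hn0 : (0:ℝ) < n := by exact_mod_cast hn
    have ht : (0:ℝ) < 2*Real.pi*y*(2*n) := by positivity
    have hsq : (v^n)^2 = Real.exp (-(2*Real.pi*y*(2*(n:ℝ)))) := by
      rw [← pow_mul, hvpow (n*2)]
      push_cast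
      ring_nf
    rw [hsq]
    refine (aux2 _ (by positivity)).trans ?_
    have : 1/(2*Real.pi*y*(2*(n:ℝ))) ≤ 1/((n:ℝ)*y) := by
      apply one_div_le_one_div_of_le (by positivity)
      nlinarith
    linarith
  -- per-term bound
  have hterm : ∀ m : ℕ,
      ‖(-1 : ℂ) ^ m * q ^ eR r (m + 1) / ((1 - q ^ (m + 1)) ^ r * (1 + q ^ (m + 1)))‖ ≤
        g1 m + g2 m := by
    intro m
    set n : ℕ := m + 1 with hndef
    set w : ℂ := q ^ n with hwdef
    have hn1 : 1 ≤ n := Nat.le_add_left 1 m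
    have hwn : ‖w‖ = v ^ n := by rw [hwdef, norm_pow, hq]
    have hvn1 : v ^ n < 1 := pow_lt_one₀ hv0.le hv1 (by omega)
    have hvn0 : 0 < v ^ n := pow_pos hv0 n
    have ha : (0:ℝ) < 1 - v^n := by linarith
    have hb : (0:ℝ) < 1 - (v^n)^2 := by nlinarith
    have hd1 : 1 - v^n ≤ ‖1 - w‖ := by
      have := norm_sub_norm_le (1:ℂ) w
      simpa [hwn] using this
    have hd2 : 1 - (v^n)^2 ≤ ‖1 - w^2‖ := by
      have := norm_sub_norm_le (1:ℂ) (w^2)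
      simpa [norm_pow, hwn] using this
    have hnorm : ‖(-1 : ℂ) ^ m * q ^ eR r n / ((1 - w) ^ r * (1 + w))‖ =
        v ^ eR r n / (‖1 - w‖ ^ r * ‖1 + w‖) := by
      rw [norm_div, norm_mul, norm_mul, norm_pow, norm_pow, norm_pow, hq]
      simp
    have hden : ‖1 - w‖ ^ r * ‖1 + w‖ = ‖1 - w‖ ^ s * ‖1 - w^2‖ := by
      rw [hrdef, pow_succ, mul_assoc, ← norm_mul]
      congr 2
      ring
    have hdenlb : (1 - v^n)^s * (1 - (v^n)^2) ≤ ‖1 - w‖ ^ r * ‖1 + w‖ := by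
      rw [hden]
      exact mul_le_mul (pow_le_pow_left₀ ha.le hd1 s) hd2 hb.le (pow_nonneg (norm_nonneg _) s)
    have hnum : v ^ eR r n ≤ v ^ (n*n) := pow_le_pow_of_le_one hv0.le hv1.le (aux4 r n)
    have step1 : ‖(-1 : ℂ) ^ m * q ^ eR r n / ((1 - w) ^ r * (1 + w))‖ ≤
        v ^ (n*n) / ((1 - v^n)^s * (1 - (v^n)^2)) := by
      rw [hnorm]
      exact div_le_div₀ (pow_nonneg hv0.le _) hnum (by positivity) hdenlb
    set u : ℝ := 1/((n:ℝ)*y) with hudef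
    have hu0 : 0 ≤ u := by positivity
    have e1 : ((1 - v^n)^s)⁻¹ ≤ (1+u)^s := by
      rw [← inv_pow]
      apply pow_le_pow_left₀ (by positivity)
      rw [← one_div]
      exact hrecip n hn1
    have e2 : (1 - (v^n)^2)⁻¹ ≤ 1 + u := by
      rw [← one_div]
      exact hrecip2 n hn1
    have step2 : v ^ (n*n) / ((1 - v^n)^s * (1 - (v^n)^2)) ≤ v ^ (n*n) * ((1+u)^s * (1+u)) := by
      rw [div_eq_mul_inv, mul_inv]
      exact mul_le_mul_of_nonneg_left (mul_le_mul e1 e2 (by positivity) (by positivity))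
        (pow_nonneg hv0.le _)
    have step3 : v ^ (n*n) * ((1+u)^s * (1+u)) ≤ g1 m + g2 m := by
      have : (1+u)^s * (1+u) = (1+u)^r := by rw [hrdef, pow_succ]
      rw [this]
      calc v ^ (n*n) * (1+u)^r ≤ v ^ (n*n) * (2^r * (1 + u^r)) := by
            apply mul_le_mul_of_nonneg_left (aux3 u hu0 r) (pow_nonneg hv0.le _)
        _ = g1 m + g2 m := by
            rw [hg1def, hg2def, hudef, hndef]
            push_cast
            ring
    exact step1.trans (step2.trans step3)
    -- summability and tsum bounds
  have hg1nonneg : ∀ m, 0 ≤ g1 m := fun m =>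
    mul_nonneg (by positivity) (pow_nonneg hv0.le _)
  have hgeo : Summable (fun m : ℕ => (2:ℝ)^r * v ^ m) :=
    (summable_geometric_of_lt_one hv0.le hv1).mul_left _
  have hg1le : ∀ m, g1 m ≤ 2^r * v^m := by
    intro m
    exact mul_le_mul_of_nonneg_left
      (pow_le_pow_of_le_one hv0.le hv1.le (by nlinarith)) (by positivity)
  have hg1sum : Summable g1 := Summable.of_nonneg_of_le hg1nonneg hg1le hgeo
  have hg2nonneg : ∀ m, 0 ≤ g2 m := fun m => by
    apply mul_nonneg (mul_nonneg (by positivity) (pow_nonneg hv0.le _)) (by positivity)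
  have hg2le : ∀ m, g2 m ≤ K * ((m:ℝ)+1) ^ (-(3/2 : ℝ)) := by
    intro m
    have hN0 : (0:ℝ) < (m:ℝ)+1 := by positivity
    have hN1 : (1:ℝ) ≤ (m:ℝ)+1 := by simp
    have hcast : (((m+1)*(m+1) : ℕ) : ℝ) = ((m:ℝ)+1)*((m:ℝ)+1) := by push_cast; ring
    have hv2 : v^((m+1)*(m+1)) ≤ (1/y)^((1/4):ℝ) * ((m:ℝ)+1) ^ (-(1/2 : ℝ)) := by
      rw [hvpow, hcast]
      calc Real.exp (-(2*Real.pi*y*(((m:ℝ)+1)*((m:ℝ)+1))))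
          ≤ (2*Real.pi*y*(((m:ℝ)+1)*((m:ℝ)+1))) ^ (-((1:ℝ)/4)) := aux1' _ (by positivity)
        _ ≤ (y*(((m:ℝ)+1)*((m:ℝ)+1))) ^ (-((1:ℝ)/4)) := by
            apply Real.rpow_le_rpow_of_nonpos (by positivity) ?_ (by norm_num)
            nlinarith [mul_pos hy0 (mul_pos hN0 hN0), hpi]
        _ = y ^ (-((1:ℝ)/4)) * (((m:ℝ)+1) ^ (-((1:ℝ)/4)) * ((m:ℝ)+1) ^ (-((1:ℝ)/4))) := by
            rw [← Real.mul_rpow hN0.le hN0.le, ← Real.mul_rpow hy0.le (by positivity)]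
        _ = (1/y)^((1/4):ℝ) * ((m:ℝ)+1) ^ (-(1/2 : ℝ)) := by
            have e1 : ((1:ℝ)/y) ^ ((1/4):ℝ) = y ^ (-((1:ℝ)/4)) := by
              rw [Real.rpow_neg hy0.le, one_div, Real.inv_rpow hy0.le]
            rw [← Real.rpow_add hN0, e1]
            norm_num
    have hpowr : (1/(((m:ℝ)+1)*y))^r ≤ (1/((m:ℝ)+1)) * (1/y)^r := by
      have hsplit : (1/(((m:ℝ)+1)*y)) = (1/((m:ℝ)+1)) * (1/y) := by
        rw [div_mul_div_comm, one_mul]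
      rw [hsplit, mul_pow]
      apply mul_le_mul_of_nonneg_right ?_ (by positivity)
      calc (1/((m:ℝ)+1))^r ≤ (1/((m:ℝ)+1))^1 :=
            pow_le_pow_of_le_one (by positivity) (by rw [div_le_one hN0]; exact hN1) hr
        _ = 1/((m:ℝ)+1) := pow_one _
    have hinv : (1:ℝ)/((m:ℝ)+1) = ((m:ℝ)+1) ^ (-(1:ℝ)) := by
      rw [Real.rpow_neg_one, one_div]
    calc g2 m = 2^r * v^((m+1)*(m+1)) * (1/(((m:ℝ)+1)*y))^r := rfl
      _ ≤ 2^r * ((1/y)^((1/4):ℝ) * ((m:ℝ)+1) ^ (-(1/2:ℝ))) * ((1/((m:ℝ)+1)) * (1/y)^r) := by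
          apply mul_le_mul (mul_le_mul_of_nonneg_left hv2 (by positivity)) hpowr
            (by positivity) (by positivity)
      _ = K * (((m:ℝ)+1) ^ (-(1/2:ℝ)) * (((m:ℝ)+1) ^ (-(1:ℝ)))) := by
          rw [hKdef, hinv]; ring
      _ = K * ((m:ℝ)+1) ^ (-(3/2:ℝ)) := by
          rw [← Real.rpow_add hN0]; norm_num
  have hg2sum : Summable g2 :=
    Summable.of_nonneg_of_le hg2nonneg hg2le (Zsummable.mul_left K)
  have hsum_g : Summable (fun m => g1 m + g2 m) := hg1sum.add hg2sum
  have hStr : ‖Str r q‖ ≤ ∑' m, (g1 m + g2 m) := by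
    rw [Str]
    exact tsum_of_norm_bounded hsum_g.hasSum hterm
  rw [Summable.tsum_add hg1sum hg2sum] at hStr
  have h1 : ∑' m, g1 m ≤ 2^r * (1-v)⁻¹ := by
    calc ∑' m, g1 m ≤ ∑' m : ℕ, (2:ℝ)^r * v^m := Summable.tsum_le_tsum hg1le hg1sum hgeo
      _ = 2^r * ∑' m : ℕ, v^m := tsum_mul_left
      _ = 2^r * (1-v)⁻¹ := by rw [tsum_geometric_of_lt_one hv0.le hv1]
  have h1' : (1-v)⁻¹ ≤ 2 * (1/y) := by
    have ha2 := aux2 (2*Real.pi*y) (by positivity)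
    rw [← hvdef] at ha2
    have e : 1/(2*Real.pi*y) ≤ 1/y := by
      apply one_div_le_one_div_of_le hy0
      nlinarith
    rw [← one_div]
    calc 1/(1-v) ≤ 1 + 1/(2*Real.pi*y) := ha2
      _ ≤ 2 * (1/y) := by
        have : (1:ℝ) ≤ 1/y := hA
        linarith
  have h2 : ∑' m, g2 m ≤ K * Z := by
    calc ∑' m, g2 m ≤ ∑' m : ℕ, K * (((m:ℝ)+1) ^ (-(3/2:ℝ))) :=
          Summable.tsum_le_tsum hg2le hg2sum (Zsummable.mul_left K)
      _ = K * Z := by rw [hZdef, tsum_mul_left]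
  have hZ0 : 0 ≤ Z := tsum_nonneg fun m => Real.rpow_nonneg (by positivity) _
  have hfin1 : (2:ℝ)^r * (2*(1/y)) ≤ 2^(r+1) * (1/y) ^ ((r:ℝ)+1/2) := by
    have hle : (1/y) ^ (1:ℝ) ≤ (1/y) ^ ((r:ℝ)+1/2) := by
      apply Real.rpow_le_rpow_of_exponent_le hA
      have : (1:ℝ) ≤ (r:ℝ) := by exact_mod_cast hr
      linarith
    rw [Real.rpow_one] at hle
    calc (2:ℝ)^r * (2*(1/y)) = 2^(r+1) * (1/y) := by ring
      _ ≤ 2^(r+1) * (1/y) ^ ((r:ℝ)+1/2) := by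
          apply mul_le_mul_of_nonneg_left hle (by positivity)
  have hfin2 : K * Z ≤ 2^r * Z * (1/y) ^ ((r:ℝ)+1/2) := by
    have e2 : (1/y)^((1/4):ℝ) * (1/y)^r = (1/y) ^ ((r:ℝ)+1/4) := by
      rw [← Real.rpow_natCast (1/y) r, ← Real.rpow_add hA0]
      ring_nf
    have hle : (1/y) ^ ((r:ℝ)+1/4) ≤ (1/y) ^ ((r:ℝ)+1/2) := by
      apply Real.rpow_le_rpow_of_exponent_le hA
      linarith
    calc K * Z = ((1/y)^((1/4):ℝ) * (1/y)^r) * (2^r * Z) := by rw [hKdef]; ring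
      _ = (1/y) ^ ((r:ℝ)+1/4) * (2^r * Z) := by rw [e2]
      _ ≤ (1/y) ^ ((r:ℝ)+1/2) * (2^r * Z) := by
          apply mul_le_mul_of_nonneg_right hle (by positivity)
      _ = 2^r * Z * (1/y) ^ ((r:ℝ)+1/2) := by ring
  calc ‖Str r q‖ ≤ (∑' m, g1 m) + ∑' m, g2 m := hStr
    _ ≤ 2^r * (2*(1/y)) + K * Z := by
        have hh := mul_le_mul_of_nonneg_left h1' (by positivity : (0:ℝ) ≤ 2^r)
        linarith [h1, h2, hh]
    _ ≤ 2^(r+1) * (1/y) ^ ((r:ℝ)+1/2) + 2^r * Z * (1/y) ^ ((r:ℝ)+1/2) := add_le_add hfin1 hfin2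
    _ = (2^(r+1) + 2^r * Z) * (1/y) ^ ((r:ℝ)+1/2) := by ring

/-- Bound for `S̃_r` away from the dominant pole. -/
theorem Str_away_from_pole (r : ℕ) (hr : 1 ≤ r) :
    ∃ C : ℝ, 0 < C ∧ ∃ N₀ : ℕ, ∀ N : ℕ, N₀ ≤ N →
      ∀ x : ℝ, 1 / (4 * Real.sqrt N) ≤ |x| → |x| ≤ 1 / 2 →
        ‖Str r (Complex.exp (2 * Real.pi * Complex.I * mkTau x (1 / (4 * Real.sqrt N))))‖ ≤
          C * (N : ℝ) ^ ((r : ℝ) / 2 + 1 / 4) := by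
  set Z : ℝ := ∑' m : ℕ, ((m:ℝ)+1) ^ (-(3/2 : ℝ)) with hZdef
  have hZ0 : 0 ≤ Z := tsum_nonneg fun m => Real.rpow_nonneg (by positivity) _
  have hC1 : (0:ℝ) < 2^(r+1) + 2^r * Z := by
    have h2 : (0:ℝ) < 2^(r+1) := by positivity
    have h3 : (0:ℝ) ≤ 2^r * Z := mul_nonneg (by positivity) hZ0
    linarith
  refine ⟨((2:ℝ)^(r+1) + 2^r * Z) * 4 ^ ((r:ℝ)+1/2),
    mul_pos hC1 (Real.rpow_pos_of_pos (by norm_num) _), 1, ?_⟩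
  intro N hN x _ _
  have hN1 : (1:ℝ) ≤ (N:ℝ) := by exact_mod_cast hN
  have hsN : (1:ℝ) ≤ Real.sqrt N := by
    rw [show (1:ℝ) = Real.sqrt 1 by simp]
    exact Real.sqrt_le_sqrt hN1
  set y : ℝ := 1 / (4 * Real.sqrt N) with hydef
  have hy0 : 0 < y := one_div_pos.mpr (by linarith)
  have hy1 : y ≤ 1 := by
    rw [hydef, div_le_one (by linarith)]
    linarith
  calc ‖Str r (Complex.exp (2 * Real.pi * Complex.I * mkTau x y))‖
      ≤ (2^(r+1) + 2^r * Z) * (1/y) ^ ((r:ℝ)+1/2) := StrKeyBound r hr x y hy0 hy1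
    _ = ((2:ℝ)^(r+1) + 2^r * Z) * 4 ^ ((r:ℝ)+1/2) * (N : ℝ) ^ ((r : ℝ) / 2 + 1 / 4) := by
        have hs : (1:ℝ)/y = 4 * Real.sqrt N := one_div_one_div _
        have h4 : ((4:ℝ) * Real.sqrt N) ^ ((r:ℝ)+1/2) =
            4 ^ ((r:ℝ)+1/2) * (Real.sqrt N) ^ ((r:ℝ)+1/2) :=
          Real.mul_rpow (by norm_num) (Real.sqrt_nonneg N)
        have h5 : (Real.sqrt N) ^ ((r:ℝ)+1/2) = (N:ℝ) ^ ((r:ℝ)/2 + 1/4) := by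
          rw [Real.sqrt_eq_rpow, ← Real.rpow_mul (Nat.cast_nonneg N)]
          norm_num
          ring_nf
        rw [hs, h4, h5]
        ring
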